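/- Let C be a superadditive (supermodular) function from subsets of {1,…,m} to ℝ with C(∅) = 0. Then the polyhedron P_H = {Q ∈ ℝ^m : ∑_{k∈K} Q_k ≥ C(K) for every nonempty K ⊆ {1,…,m}} equals the Minkowski sum of the convex hull of the set of corner points {q_π : π a permutation of {1,…,m}} and the nonnegative orthant {w ∈ ℝ^m : w_k ≥ 0 for all k}. -/

import Mathlib

open scoped BigOperators

set_option maxRecDepth 8000
open Pointwise
set_option maxHeartbeats 1000000

/-- The corner point of a supermodular set function C associated to a permutation π:
its π(i)-th coordinate is C({π(i),…,π(m)}) − C({π(i+1),…,π(m)}). -/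
noncomputable def cornerPoint {m : ℕ} (C : Finset (Fin m) → ℝ) (π : Equiv.Perm (Fin m)) :
    Fin m → ℝ :=
  fun k => C ((Finset.univ.filter (fun j : Fin m => π.symm k ≤ j)).image π)
    - C ((Finset.univ.filter (fun j : Fin m => π.symm k < j)).image π)

namespace PHaux

variable {m : ℕ}

/-- suffix set -/
def Suf (π : Equiv.Perm (Fin m)) (n : ℕ) : Finset (Fin m) :=
  (Finset.univ.filter (fun j : Fin m => n ≤ (j : ℕ))).image π

lemma mem_Suf {π : Equiv.Perm (Fin m)} {n : ℕ} {k : Fin m} :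
    k ∈ Suf π n ↔ n ≤ ((π.symm k : Fin m) : ℕ) := by
  simp only [Suf, Finset.mem_image, Finset.mem_filter, Finset.mem_univ, true_and]
  constructor
  · rintro ⟨j, hj, rfl⟩; simpa using hj
  · intro h; exact ⟨π.symm k, h, π.apply_symm_apply k⟩

lemma Suf_empty {π : Equiv.Perm (Fin m)} {n : ℕ} (hn : m ≤ n) : Suf π n = ∅ := by
  ext k; simp only [mem_Suf, Finset.notMem_empty, iff_false]
  exact fun h => absurd ((π.symm k).isLt) (by omega)

lemma Suf_zero {π : Equiv.Perm (Fin m)} : Suf π 0 = Finset.univ := by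
  ext k; simp [mem_Suf]

lemma Suf_succ_insert {π : Equiv.Perm (Fin m)} {n : ℕ} (hn : n < m) :
    Suf π n = insert (π ⟨n, hn⟩) (Suf π (n + 1)) := by
  ext k
  simp only [mem_Suf, Finset.mem_insert]
  constructor
  · intro h
    rcases eq_or_lt_of_le h with h' | h'
    · left
      have : π.symm k = ⟨n, hn⟩ := by
        apply Fin.ext
        simp only [Fin.val_mk]
        omega
      rw [← this, π.apply_symm_apply]
    · right; omega
  · rintro (rfl | h)
    · simp
    · omega

lemma not_mem_Suf_succ {π : Equiv.Perm (Fin m)} {n : ℕ} (hn : n < m) :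
    π ⟨n, hn⟩ ∉ Suf π (n + 1) := by
  intro h
  rw [mem_Suf] at h
  rw [Equiv.symm_apply_apply] at h
  simp only [Fin.val_mk] at h
  omega

lemma cornerPoint_apply (C : Finset (Fin m) → ℝ) (π : Equiv.Perm (Fin m)) (i : Fin m) :
    cornerPoint C π (π i) = C (Suf π i) - C (Suf π (i + 1)) := by
  have h1 : (Finset.univ.filter (fun j : Fin m => π.symm (π i) ≤ j))
      = (Finset.univ.filter (fun j : Fin m => (i : ℕ) ≤ (j : ℕ))) := by
    apply Finset.filter_congr; intro j _
    rw [Equiv.symm_apply_apply]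
    exact Fin.le_def
  have h2 : (Finset.univ.filter (fun j : Fin m => π.symm (π i) < j))
      = (Finset.univ.filter (fun j : Fin m => ((i : ℕ) + 1) ≤ (j : ℕ))) := by
    apply Finset.filter_congr; intro j _
    rw [Equiv.symm_apply_apply]
    exact Fin.lt_def.trans Nat.lt_iff_add_one_le
  rw [cornerPoint, h1, h2]; rfl

/-- The corner points are feasible. -/
lemma corner_feasible (C : Finset (Fin m) → ℝ) (π : Equiv.Perm (Fin m))
    (hsup : ∀ K L : Finset (Fin m), C K + C L ≤ C (K ∪ L) + C (K ∩ L))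
    (h0 : C ∅ = 0) (K : Finset (Fin m)) :
    C K ≤ ∑ k ∈ K, cornerPoint C π k := by
  have key : ∀ d : ℕ, C (K ∩ Suf π (m - d)) ≤ ∑ k ∈ K ∩ Suf π (m - d), cornerPoint C π k := by
    intro d
    induction d with
    | zero => simp [Suf_empty (le_refl m), h0]
    | succ d ih =>
      by_cases hd : m ≤ d
      · have : m - (d+1) = m - d := by omega
        rw [this]; exact ih
      · push_neg at hd
        set n := m - (d + 1) with hn
        have hnm : n < m := by omega
        have hsucc : n + 1 = m - d := by omega
        rw [← hsucc] at ih
        rw [Suf_succ_insert hnm]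
        by_cases hK : π ⟨n, hnm⟩ ∈ K
        · have hins : K ∩ insert (π ⟨n, hnm⟩) (Suf π (n+1))
              = insert (π ⟨n, hnm⟩) (K ∩ Suf π (n+1)) := by
            ext k; simp only [Finset.mem_inter, Finset.mem_insert]
            constructor
            · rintro ⟨h1, h2 | h2⟩
              · exact Or.inl h2
              · exact Or.inr ⟨h1, h2⟩
            · rintro (rfl | ⟨h1, h2⟩)
              · exact ⟨hK, Or.inl rfl⟩
              · exact ⟨h1, Or.inr h2⟩
          rw [hins]
          have hnotmem : π ⟨n, hnm⟩ ∉ K ∩ Suf π (n+1) := fun h =>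
            not_mem_Suf_succ hnm (Finset.mem_inter.mp h).2
          rw [Finset.sum_insert hnotmem, cornerPoint_apply]
          have hsup' := hsup (insert (π ⟨n, hnm⟩) (K ∩ Suf π (n+1))) (Suf π (n+1))
          have hunion : insert (π ⟨n, hnm⟩) (K ∩ Suf π (n+1)) ∪ Suf π (n+1)
              = Suf π n := by
            rw [Suf_succ_insert hnm]
            ext k; simp only [Finset.mem_union, Finset.mem_insert, Finset.mem_inter]
            tauto
          have hinter : insert (π ⟨n, hnm⟩) (K ∩ Suf π (n+1)) ∩ Suf π (n+1)
              = K ∩ Suf π (n+1) := by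
            ext k; simp only [Finset.mem_inter, Finset.mem_insert]
            constructor
            · rintro ⟨rfl | ⟨h1, h2⟩, h3⟩
              · exact absurd h3 (not_mem_Suf_succ hnm)
              · exact ⟨h1, h3⟩
            · rintro ⟨h1, h2⟩; exact ⟨Or.inr ⟨h1, h2⟩, h2⟩
          rw [hunion, hinter] at hsup'
          linarith
        · have hins : K ∩ insert (π ⟨n, hnm⟩) (Suf π (n+1)) = K ∩ Suf π (n+1) := by
            ext k; simp only [Finset.mem_inter, Finset.mem_insert]
            constructor
            · rintro ⟨h1, rfl | h2⟩
              · exact absurd h1 hK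
              · exact ⟨h1, h2⟩
            · rintro ⟨h1, h2⟩; exact ⟨h1, Or.inr h2⟩
          rw [hins]; exact ih
  have := key m
  simpa [Nat.sub_self, Suf_zero, Finset.inter_univ] using this


lemma abel_aux (a D : ℕ → ℝ) (ha0 : 0 ≤ a 0) (hamono : ∀ n, a n ≤ a (n + 1))
    (hD : ∀ n, 0 ≤ D n) :
    ∀ n : ℕ, 0 ≤ (∑ i ∈ Finset.range n, a i * (D i - D (i + 1))) + a n * D n := by
  intro n
  induction n with
  | zero => simpa using mul_nonneg ha0 (hD 0)
  | succ n ih =>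
    rw [Finset.sum_range_succ]
    have han : 0 ≤ a (n + 1) - a n := by linarith [hamono n]
    nlinarith [mul_nonneg han (hD (n + 1))]

/-- The greedy/Edmonds inequality. -/
lemma greedy (C : Finset (Fin m) → ℝ) (π : Equiv.Perm (Fin m)) (h0 : C ∅ = 0)
    (hm : 1 ≤ m) (c : Fin m → ℝ) (hc : ∀ k, 0 ≤ c k)
    (hmono : ∀ i j : Fin m, i ≤ j → c (π i) ≤ c (π j))
    (Q : Fin m → ℝ) (hQ : ∀ K : Finset (Fin m), K.Nonempty → C K ≤ ∑ k ∈ K, Q k) :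
    ∑ k, c k * cornerPoint C π k ≤ ∑ k, c k * Q k := by
  set a : ℕ → ℝ := fun n => c (π ⟨min n (m - 1), by omega⟩) with ha
  set D : ℕ → ℝ := fun n => (∑ k ∈ Suf π n, Q k) - C (Suf π n) with hD
  have hDnon : ∀ n, 0 ≤ D n := by
    intro n
    by_cases hn : n < m
    · have hne : (Suf π n).Nonempty :=
        ⟨π ⟨n, hn⟩, by rw [Suf_succ_insert hn]; exact Finset.mem_insert_self _ _⟩
      have := hQ _ hne
      simp only [hD]; linarith
    · push_neg at hn
      simp [hD, Suf_empty hn, h0]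
  have hDm : D m = 0 := by simp [hD, Suf_empty (le_refl m), h0]
  have ha0 : 0 ≤ a 0 := hc _
  have hamono : ∀ n, a n ≤ a (n + 1) := by
    intro n
    apply hmono
    rw [Fin.mk_le_mk]
    omega
  have key := abel_aux a D ha0 hamono hDnon m
  rw [hDm, mul_zero, add_zero] at key
  have step : ∀ i : Fin m, a ↑i * (D ↑i - D (↑i + 1))
      = c (π i) * (Q (π i) - cornerPoint C π (π i)) := by
    intro i
    have hlt : (i : ℕ) < m := i.isLt
    have hmk : (⟨(i : ℕ), hlt⟩ : Fin m) = i := rfl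
    have hinsert : Suf π (i : ℕ) = insert (π i) (Suf π ((i : ℕ) + 1)) := by
      rw [Suf_succ_insert hlt, hmk]
    have hnm : π i ∉ Suf π ((i : ℕ) + 1) := by
      have := not_mem_Suf_succ (π := π) hlt; rwa [hmk] at this
    have hsum : (∑ k ∈ Suf π (i : ℕ), Q k) = Q (π i) + ∑ k ∈ Suf π ((i : ℕ) + 1), Q k := by
      rw [hinsert, Finset.sum_insert hnm]
    have hcp := cornerPoint_apply C π i
    have hai : a ↑i = c (π i) := by
      have h2 : (⟨min (i : ℕ) (m - 1), by omega⟩ : Fin m) = i := by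
        apply Fin.ext
        have := i.isLt
        simp only [Fin.val_mk]
        omega
      simp only [ha]; rw [h2]
    rw [hai]
    simp only [hD]
    rw [hsum, hcp]
    ring
  have h1 : ∑ i ∈ Finset.range m, a i * (D i - D (i + 1))
      = ∑ i : Fin m, a ↑i * (D ↑i - D (↑i + 1)) :=
    (Fin.sum_univ_eq_sum_range (fun i => a i * (D i - D (i + 1))) m).symm
  rw [h1, Finset.sum_congr rfl (fun i _ => step i)] at key
  have h2 : ∑ i : Fin m, c (π i) * (Q (π i) - cornerPoint C π (π i))
      = ∑ k, c k * (Q k - cornerPoint C π k) :=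
    Equiv.sum_comp π (fun k => c k * (Q k - cornerPoint C π k))
  rw [h2] at key
  have h3 : ∑ k, c k * (Q k - cornerPoint C π k)
      = ∑ k, c k * Q k - ∑ k, c k * cornerPoint C π k := by
    rw [← Finset.sum_sub_distrib]
    exact Finset.sum_congr rfl (fun k _ => by ring)
  linarith [h3 ▸ key]

end PHaux


/-- Minkowski–Weyl description of the rate polyhedron: for a supermodular C with C(∅) = 0,
P_H = {Q : ∑_{k∈K} Q_k ≥ C(K) for all nonempty K} equals the Minkowski sum of the convex
hull of the corner points {q_π} and the nonnegative orthant. -/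
theorem PH_eq_conv_corners_add_orthant {m : ℕ} (hm : 1 ≤ m)
    (C : Finset (Fin m) → ℝ)
    (hsup : ∀ K L : Finset (Fin m), C K + C L ≤ C (K ∪ L) + C (K ∩ L))
    (h0 : C ∅ = 0) :
    {Q : Fin m → ℝ | ∀ K : Finset (Fin m), K.Nonempty → C K ≤ ∑ k ∈ K, Q k}
      = {x : Fin m → ℝ |
          ∃ s ∈ convexHull ℝ {q : Fin m → ℝ | ∃ π : Equiv.Perm (Fin m), q = cornerPoint C π},
          ∃ w : Fin m → ℝ, (∀ k, 0 ≤ w k) ∧ x = s + w} := by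
  classical
  set corners : Set (Fin m → ℝ) := {q | ∃ π : Equiv.Perm (Fin m), q = cornerPoint C π}
    with hcor
  set O : Set (Fin m → ℝ) := {w | ∀ k, 0 ≤ w k} with hOdef
  set A : Set (Fin m → ℝ) := convexHull ℝ corners with hA
  have hSeq : {x : Fin m → ℝ | ∃ s ∈ A, ∃ w : Fin m → ℝ, (∀ k, 0 ≤ w k) ∧ x = s + w}
      = A + O := by
    ext x
    simp only [Set.mem_add, Set.mem_setOf_eq]
    constructor
    · rintro ⟨s, hs, w, hw, rfl⟩; exact ⟨s, hs, w, hw, rfl⟩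
    · rintro ⟨s, hs, w, hw, h⟩; exact ⟨s, hs, w, hw, h.symm⟩
  rw [hSeq]
  -- basic facts
  have hOconv : Convex ℝ O := by
    intro x hx y hy a b hb hb' _
    intro k
    have hxk := hx k
    have hyk := hy k
    have hk : (a • x + b • y) k = a * x k + b * y k := by
      simp [smul_eq_mul]
    rw [hk]
    nlinarith
  have hOclosed : IsClosed O := by
    have hO2 : O = ⋂ k, {w : Fin m → ℝ | 0 ≤ w k} := by
      ext w; simp [hOdef, Set.mem_iInter]
    rw [hO2]
    exact isClosed_iInter fun k => isClosed_le continuous_const (continuous_apply k)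
  have hcfin : corners.Finite := by
    have hrange : corners = Set.range (cornerPoint C) := by
      ext q; simp [hcor, Set.mem_range, eq_comm]
    rw [hrange]; exact Set.finite_range _
  have hAcpt : IsCompact A := hcfin.isCompact_convexHull ℝ
  have hSconv : Convex ℝ (A + O) := (convex_convexHull ℝ corners).add hOconv
  have hSclosed : IsClosed (A + O) := hOclosed.add_left_of_isCompact hAcpt
  have hzeroO : (0 : Fin m → ℝ) ∈ O := by intro k; simp
  have hcornA : ∀ π : Equiv.Perm (Fin m), cornerPoint C π ∈ A :=
    fun π => subset_convexHull ℝ corners ⟨π, rfl⟩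
  have hAsubS : ∀ q ∈ A, q ∈ A + O := by
    intro q hq
    have := Set.add_mem_add hq hzeroO
    simpa using this
  apply Set.Subset.antisymm
  · -- P_H ⊆ A + O
    intro Q hQ
    by_contra hnot
    obtain ⟨f, u, hfu, hub⟩ := geometric_hahn_banach_point_closed hSconv hSclosed hnot
    set c : Fin m → ℝ := fun k => f (Pi.single k 1) with hc
    have hfx : ∀ x : Fin m → ℝ, f x = ∑ k, c k * x k := by
      intro x
      conv_lhs => rw [← Finset.univ_sum_single x]
      rw [map_sum]
      apply Finset.sum_congr rfl
      intro k _
      have hsingle : Pi.single k (x k) = x k • (Pi.single k (1 : ℝ) : Fin m → ℝ) := by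
        funext j
        rcases eq_or_ne j k with rfl | hj
        · simp
        · simp [Pi.single_eq_of_ne hj]
      rw [hsingle, map_smul, smul_eq_mul, hc]
      ring
    set s0 : Fin m → ℝ := cornerPoint C 1 with hs0
    have hmemS : ∀ w : Fin m → ℝ, (∀ j, 0 ≤ w j) → s0 + w ∈ A + O :=
      fun w hw => Set.add_mem_add (hcornA 1) hw
    have hus0 : u < f s0 := hub s0 (hAsubS s0 (hcornA 1))
    have hcnon : ∀ k, 0 ≤ c k := by
      intro k
      by_contra hk
      push_neg at hk
      set t : ℝ := (u - f s0) / c k with ht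
      have htpos : 0 < t := div_pos_of_neg_of_neg (by linarith) hk
      have hwnon : ∀ j, 0 ≤ (t • (Pi.single k (1 : ℝ) : Fin m → ℝ)) j := by
        intro j
        rcases eq_or_ne j k with rfl | hj
        · simp [le_of_lt htpos]
        · simp [Pi.single_eq_of_ne hj]
      have hmem := hub _ (hmemS _ hwnon)
      have hval : f (s0 + t • (Pi.single k (1 : ℝ) : Fin m → ℝ)) = f s0 + t * c k := by
        rw [map_add, map_smul, smul_eq_mul, hc]
      have hcancel : t * c k = u - f s0 := by
        rw [ht]
        exact div_mul_cancel₀ (u - f s0) (ne_of_lt hk)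
      rw [hval, hcancel] at hmem
      linarith
    set π : Equiv.Perm (Fin m) := Tuple.sort c with hπ
    have hmono : ∀ i j : Fin m, i ≤ j → c (π i) ≤ c (π j) :=
      fun i j hij => Tuple.monotone_sort c hij
    have hgreedy := PHaux.greedy C π h0 hm c hcnon hmono Q hQ
    have h1 : u < f (cornerPoint C π) := hub _ (hAsubS _ (hcornA π))
    rw [hfx] at h1 hfu
    linarith
  · -- A + O ⊆ P_H
    have hPHconv : Convex ℝ {Q : Fin m → ℝ | ∀ K : Finset (Fin m), K.Nonempty →
        C K ≤ ∑ k ∈ K, Q k} := by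
      intro x hx y hy a b ha' hb' hab K hK
      have h1 := hx K hK
      have h2 := hy K hK
      have h3 : ∑ k ∈ K, (a • x + b • y) k = a * ∑ k ∈ K, x k + b * ∑ k ∈ K, y k := by
        simp [smul_eq_mul, Finset.mul_sum, Finset.sum_add_distrib]
      rw [h3]
      have h4 : a * C K + b * C K = C K := by rw [← add_mul, hab, one_mul]
      linarith [mul_le_mul_of_nonneg_left h1 ha', mul_le_mul_of_nonneg_left h2 hb']
    have hcorPH : corners ⊆ {Q : Fin m → ℝ | ∀ K : Finset (Fin m), K.Nonempty →
        C K ≤ ∑ k ∈ K, Q k} := by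
      rintro q ⟨π, rfl⟩ K hK
      exact PHaux.corner_feasible C π hsup h0 K
    have hhullPH := convexHull_min hcorPH hPHconv
    rintro x hx
    rw [Set.mem_add] at hx
    obtain ⟨s, hs, w, hw, rfl⟩ := hx
    intro K hK
    have h1 := hhullPH hs K hK
    have h2 : (0 : ℝ) ≤ ∑ k ∈ K, w k := Finset.sum_nonneg fun k _ => hw k
    have h3 : ∑ k ∈ K, (s + w) k = ∑ k ∈ K, s k + ∑ k ∈ K, w k := by
      simp [Finset.sum_add_distrib]
    rw [h3]
    linarith
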